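/- In the cyclic-treatment model, fix a strain i and let Y(c) denote its single-strain (isolation) dynamics with μ = μ_i, k = k_i and inoculum X_0 = X_{i0}. If Y(c) → 0 as c → ∞ (strain i goes extinct in isolation), then X_i(t_c^f) → 0 as c → ∞ (strain i goes extinct in competition). -/

import Mathlib

open scoped Classical

/-- Extinction indicator: `Ie Xe x = 1` if `x ≥ Xe`, else `0`. -/
noncomputable def Ie (Xe x : ℝ) : ℝ := if Xe ≤ x then 1 else 0

/-- Start-of-cycle concentrations of the cyclic-treatment model:
`X0 μ k tg tk D Xe Xinit tsat c i` is the concentration `X⁰_{i,c+1}` of strain `i` at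
the start of cycle `c+1` (index `0` is the inoculum), where `tsat c` is the saturation
time of cycle `c+1`.  The end-of-cycle concentration `X_i(t_c^f)` of paper cycle
`c ≥ 1` is `X0 … c i`. -/
noncomputable def X0 {n : ℕ} (μ k : Fin n → ℝ) (tg tk D Xe : ℝ)
    (Xinit : Fin n → ℝ) (tsat : ℕ → ℝ) : ℕ → Fin n → ℝ
  | 0 => Xinit
  | c + 1 => fun i =>
      D * X0 μ k tg tk D Xe Xinit tsat c i *
        Real.exp (μ i *
            (if ∃ j, Xe ≤ X0 μ k tg tk D Xe Xinit tsat c j then min tg (tsat c) else tg) *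
            Ie Xe (X0 μ k tg tk D Xe Xinit tsat c i) -
          k i * tk)

/-- Growth duration `t_{c+1}` of cycle `c+1` of the cyclic-treatment model:
`min {t_g, t^sat}` when some strain is above the extinction limit, else `t_g`. -/
noncomputable def tdur {n : ℕ} (μ k : Fin n → ℝ) (tg tk D Xe : ℝ)
    (Xinit : Fin n → ℝ) (tsat : ℕ → ℝ) (c : ℕ) : ℝ :=
  if ∃ j, Xe ≤ X0 μ k tg tk D Xe Xinit tsat c j then min tg (tsat c) else tg

/-- Equilibrium time `(k t_k − log D)/μ` of a strain with kill rate `kk`, growth rate `m`. -/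
noncomputable def teq (kk tk D m : ℝ) : ℝ := (kk * tk - Real.log D) / m

/-- Single-strain (isolation) dynamics `Y(c)`: index `0` is the inoculum `X_0 = Y(1)`,
so `isoY μ k tg tk D Xe K Xinit c` is `Y(c+1)` of the paper. -/
noncomputable def isoY (μ k tg tk D Xe K Xinit : ℝ) : ℕ → ℝ
  | 0 => Xinit
  | c + 1 =>
      D * isoY μ k tg tk D Xe K Xinit c *
        Real.exp (μ *
            (if Xe ≤ isoY μ k tg tk D Xe K Xinit c then
              min tg ((1 / μ) * Real.log (K / isoY μ k tg tk D Xe K Xinit c))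
            else tg) *
            Ie Xe (isoY μ k tg tk D Xe K Xinit c) -
          k * tk)

/-- Lemma 2 of the paper: if strain `i` goes extinct in isolation, it
goes extinct in competition. -/
theorem stmt4 (n : ℕ) (hn : 0 < n) (μ k : Fin n → ℝ) (tg tk D Xe K : ℝ)
    (Xinit : Fin n → ℝ) (tsat : ℕ → ℝ)
    (hμ : ∀ i, 0 < μ i) (hk : ∀ i, 0 ≤ k i) (htg : 0 < tg) (htk : 0 < tk)
    (hD0 : 0 < D) (hD1 : D < 1) (hXe : 0 < Xe) (hXeK : Xe < K)
    (hXinit : ∀ i, 0 ≤ Xinit i) (hsum : ∑ i, Xinit i ≤ K)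
    (htsat : ∀ c, (∃ j, Xe ≤ X0 μ k tg tk D Xe Xinit tsat c j) →
      ∑ i, X0 μ k tg tk D Xe Xinit tsat c i *
        Real.exp (μ i * tsat c * Ie Xe (X0 μ k tg tk D Xe Xinit tsat c i)) = K)
    (i : Fin n)
    (hiso : Filter.Tendsto (isoY (μ i) (k i) tg tk D Xe K (Xinit i))
      Filter.atTop (nhds 0)) :
    Filter.Tendsto (fun c => X0 μ k tg tk D Xe Xinit tsat c i) Filter.atTop (nhds 0) := by
  have hK : 0 < K := hXe.trans hXeK
  set Xc := X0 μ k tg tk D Xe Xinit tsat with hXc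
  set Y := isoY (μ i) (k i) tg tk D Xe K (Xinit i) with hY
  -- nonnegativity of competition dynamics
  have hX0nn : ∀ c j, 0 ≤ Xc c j := by
    intro c
    induction c with
    | zero => exact hXinit
    | succ c ih =>
      intro j
      show 0 ≤ D * Xc c j * Real.exp _
      exact mul_nonneg (mul_nonneg hD0.le (ih j)) (Real.exp_pos _).le
  -- invariant for isolation dynamics
  have hYinv : ∀ c, 0 ≤ Y c ∧ Y c ≤ K := by
    intro c
    induction c with
    | zero =>
      refine ⟨hXinit i, le_trans ?_ hsum⟩
      exact Finset.single_le_sum (fun j _ => hXinit j) (Finset.mem_univ i)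
    | succ c ih =>
      obtain ⟨hy0, hyK⟩ := ih
      have hnn : 0 ≤ Y (c + 1) := by
        show 0 ≤ D * Y c * Real.exp _
        exact mul_nonneg (mul_nonneg hD0.le hy0) (Real.exp_pos _).le
      refine ⟨hnn, ?_⟩
      show D * Y c * Real.exp _ ≤ K
      by_cases hy : Xe ≤ Y c
      · have hypos : 0 < Y c := lt_of_lt_of_le hXe hy
        simp only [← hY, hy, if_true, Ie, mul_one]
        set s := min tg ((1 / μ i) * Real.log (K / Y c)) with hs
        have hexps : Real.exp (μ i * s) ≤ K / Y c := by
          have h1 : μ i * s ≤ Real.log (K / Y c) := by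
            have := min_le_right tg ((1 / μ i) * Real.log (K / Y c))
            calc μ i * s ≤ μ i * ((1 / μ i) * Real.log (K / Y c)) :=
                  mul_le_mul_of_nonneg_left this (hμ i).le
              _ = Real.log (K / Y c) := by
                  rw [← mul_assoc, mul_one_div, div_self (hμ i).ne', one_mul]
          calc Real.exp (μ i * s) ≤ Real.exp (Real.log (K / Y c)) := Real.exp_le_exp.mpr h1
            _ = K / Y c := Real.exp_log (div_pos hK hypos)
        have h2 : Y c * Real.exp (μ i * s) ≤ K := by
          calc Y c * Real.exp (μ i * s) ≤ Y c * (K / Y c) :=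
                mul_le_mul_of_nonneg_left hexps hy0
            _ = K := by field_simp
        have h3 : Real.exp (μ i * s - k i * tk) ≤ Real.exp (μ i * s) := by
          apply Real.exp_le_exp.mpr
          nlinarith [mul_nonneg (hk i) htk.le]
        calc D * Y c * Real.exp (μ i * s - k i * tk)
            ≤ D * Y c * Real.exp (μ i * s) :=
              mul_le_mul_of_nonneg_left h3 (mul_nonneg hD0.le hy0)
          _ = D * (Y c * Real.exp (μ i * s)) := by ring
          _ ≤ 1 * K := by
              apply mul_le_mul hD1.le h2 (mul_nonneg hy0 (Real.exp_pos _).le) zero_le_one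
          _ = K := one_mul K
      · simp only [← hY, hy, if_false, Ie, mul_zero, zero_sub]
        have : Real.exp (-(k i * tk)) ≤ 1 := by
          apply Real.exp_le_one_iff.mpr
          nlinarith [mul_nonneg (hk i) htk.le]
        calc D * Y c * Real.exp (-(k i * tk)) ≤ D * Y c * 1 :=
              mul_le_mul_of_nonneg_left this (mul_nonneg hD0.le hy0)
          _ = D * Y c := mul_one _
          _ ≤ 1 * K := mul_le_mul hD1.le hyK hy0 zero_le_one
          _ = K := one_mul K
  -- main comparison
  have hmain : ∀ c, Xc c i ≤ Y c := by
    intro c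
    induction c with
    | zero => exact le_refl _
    | succ c ih =>
      obtain ⟨hy0, hyK⟩ := hYinv c
      have hx0 : 0 ≤ Xc c i := hX0nn c i
      by_cases hx : Xe ≤ Xc c i
      · have hy : Xe ≤ Y c := le_trans hx ih
        have hypos : 0 < Y c := lt_of_lt_of_le hXe hy
        have hex : ∃ j, Xe ≤ Xc c j := ⟨i, hx⟩
        show D * Xc c i * Real.exp (μ i *
            (if ∃ j, Xe ≤ Xc c j then min tg (tsat c) else tg) * Ie Xe (Xc c i)
            - k i * tk) ≤ D * Y c * Real.exp _
        simp only [← hY, hex, if_true, hx, hy, Ie, if_pos, mul_one]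
        -- key bound from saturation equation
        have hxtsat : Xc c i * Real.exp (μ i * tsat c) ≤ K := by
          have := htsat c hex
          rw [← this]
          have : Xc c i * Real.exp (μ i * tsat c) =
              Xc c i * Real.exp (μ i * tsat c * Ie Xe (Xc c i)) := by
            simp [Ie, hx]
          rw [this]
          exact Finset.single_le_sum
            (f := fun j => Xc c j * Real.exp (μ j * tsat c * Ie Xe (Xc c j)))
            (fun j _ => mul_nonneg (hX0nn c j) (Real.exp_pos _).le) (Finset.mem_univ i)
        set L := (1 / μ i) * Real.log (K / Y c) with hL
        have key : Xc c i * Real.exp (μ i * min tg (tsat c)) ≤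
            Y c * Real.exp (μ i * min tg L) := by
          rcases le_total tg L with hcase | hcase
          · rw [min_eq_left hcase]
            calc Xc c i * Real.exp (μ i * min tg (tsat c))
                ≤ Xc c i * Real.exp (μ i * tg) := by
                  apply mul_le_mul_of_nonneg_left _ hx0
                  exact Real.exp_le_exp.mpr
                    (mul_le_mul_of_nonneg_left (min_le_left _ _) (hμ i).le)
              _ ≤ Y c * Real.exp (μ i * tg) :=
                  mul_le_mul_of_nonneg_right ih (Real.exp_pos _).le
          · rw [min_eq_right hcase]
            have hYL : Y c * Real.exp (μ i * L) = K := by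
              have : μ i * L = Real.log (K / Y c) := by rw [hL, ← mul_assoc, mul_one_div, div_self (hμ i).ne', one_mul]
              rw [this, Real.exp_log (div_pos hK hypos)]
              field_simp
            rw [hYL]
            calc Xc c i * Real.exp (μ i * min tg (tsat c))
                ≤ Xc c i * Real.exp (μ i * tsat c) := by
                  apply mul_le_mul_of_nonneg_left _ hx0
                  exact Real.exp_le_exp.mpr
                    (mul_le_mul_of_nonneg_left (min_le_right _ _) (hμ i).le)
              _ ≤ K := hxtsat
        calc D * Xc c i * Real.exp (μ i * min tg (tsat c) - k i * tk)
            = D * (Xc c i * Real.exp (μ i * min tg (tsat c))) * Real.exp (-(k i * tk)) := by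
              rw [sub_eq_add_neg, Real.exp_add]; ring
          _ ≤ D * (Y c * Real.exp (μ i * min tg L)) * Real.exp (-(k i * tk)) := by
              apply mul_le_mul_of_nonneg_right _ (Real.exp_pos _).le
              exact mul_le_mul_of_nonneg_left key hD0.le
          _ = D * Y c * Real.exp (μ i * min tg L - k i * tk) := by
              rw [sub_eq_add_neg, Real.exp_add]; ring
      · -- Xc c i below extinction limit
        show D * Xc c i * Real.exp (μ i *
            (if ∃ j, Xe ≤ Xc c j then min tg (tsat c) else tg) * Ie Xe (Xc c i)
            - k i * tk) ≤ D * Y c * Real.exp _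
        have hIx : Ie Xe (Xc c i) = 0 := by simp [Ie, hx]
        rw [hIx, mul_zero, zero_sub]
        by_cases hy : Xe ≤ Y c
        · have hypos : 0 < Y c := lt_of_lt_of_le hXe hy
          simp only [← hY, hy, if_true, Ie, mul_one]
          have hs0 : 0 ≤ min tg ((1 / μ i) * Real.log (K / Y c)) := by
            apply le_min htg.le
            apply mul_nonneg (one_div_pos.mpr (hμ i)).le
            apply Real.log_nonneg
            rw [le_div_iff₀ hypos]; linarith
          have hle : Real.exp (-(k i * tk)) ≤
              Real.exp (μ i * min tg ((1 / μ i) * Real.log (K / Y c)) - k i * tk) := by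
            apply Real.exp_le_exp.mpr
            have : 0 ≤ μ i * min tg ((1 / μ i) * Real.log (K / Y c)) :=
              mul_nonneg (hμ i).le hs0
            linarith
          calc D * Xc c i * Real.exp (-(k i * tk))
              ≤ D * Y c * Real.exp (-(k i * tk)) :=
                mul_le_mul_of_nonneg_right
                  (mul_le_mul_of_nonneg_left ih hD0.le) (Real.exp_pos _).le
            _ ≤ D * Y c * Real.exp (μ i * min tg ((1 / μ i) * Real.log (K / Y c))
                  - k i * tk) :=
                mul_le_mul_of_nonneg_left hle (mul_nonneg hD0.le hy0)
        · simp only [← hY, hy, if_false, Ie, mul_zero, zero_sub]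
          exact mul_le_mul_of_nonneg_right
            (mul_le_mul_of_nonneg_left ih hD0.le) (Real.exp_pos _).le
  exact squeeze_zero (fun c => hX0nn c i) hmain hiso
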